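/- Let V be a p × p Haar-distributed random orthogonal matrix with p > 1, let i ≠ j be distinct row indices and l ≠ k distinct column indices. Then E[v_{il}·v_{jl}·v_{ik}·v_{jk}] = −1/((p−1)·p·(p+2)). -/

import Mathlib

open MeasureTheory Matrix
set_option linter.unusedSectionVars false

instance matrixMeasurableSpace (m n : Type*) : MeasurableSpace (Matrix m n ℝ) :=
  inferInstanceAs (MeasurableSpace (m → n → ℝ))

namespace S7

variable {p : ℕ}

abbrev G (p : ℕ) := ↥(Matrix.orthogonalGroup (Fin p) ℝ)

def ent (a b : Fin p) (V : G p) : ℝ := (V : Matrix (Fin p) (Fin p) ℝ) a b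

lemma measurable_ent (a b : Fin p) : Measurable (ent (p := p) a b) :=
  (((measurable_pi_apply a).comp measurable_subtype_coe).eval (a := b))

lemma col_orth (V : G p) (b b' : Fin p) :
    ∑ m, ent m b V * ent m b' V = if b = b' then 1 else 0 := by
  have h2 := congrFun (congrFun V.2.1 b) b'
  simpa [Matrix.mul_apply, Matrix.one_apply, ent, Matrix.star_eq_conjTranspose,
    Matrix.conjTranspose_apply] using h2

lemma row_orth (V : G p) (a a' : Fin p) :
    ∑ m, ent a m V * ent a' m V = if a = a' then 1 else 0 := by
  have h2 := congrFun (congrFun V.2.2 a) a'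
  simpa [Matrix.mul_apply, Matrix.one_apply, ent, Matrix.star_eq_conjTranspose,
    Matrix.conjTranspose_apply] using h2

lemma abs_ent_le_one (V : G p) (a b : Fin p) : |ent a b V| ≤ 1 := by
  have h := col_orth V b b
  rw [if_pos rfl] at h
  have h1 : ent a b V * ent a b V ≤ 1 := by
    rw [← h]
    exact Finset.single_le_sum (f := fun m => ent m b V * ent m b V)
      (fun m _ => mul_self_nonneg _) (Finset.mem_univ a)
  exact abs_le_one_iff_mul_self_le_one.2 h1

lemma measurable_mul_left (g : G p) : Measurable (fun V : G p => g * V) := by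
  have : Measurable (fun V : G p =>
      ((g : Matrix (Fin p) (Fin p) ℝ) * (V : Matrix (Fin p) (Fin p) ℝ))) := by
    apply measurable_pi_lambda; intro a
    apply measurable_pi_lambda; intro b
    simp only [Matrix.mul_apply]
    exact Finset.measurable_sum _ (fun m _ => (measurable_const.mul (measurable_ent m b)))
  exact Measurable.subtype_mk this

lemma measurable_mul_right (g : G p) : Measurable (fun V : G p => V * g) := by
  have : Measurable (fun V : G p =>
      ((V : Matrix (Fin p) (Fin p) ℝ) * (g : Matrix (Fin p) (Fin p) ℝ))) := by
    apply measurable_pi_lambda; intro a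
    apply measurable_pi_lambda; intro b
    simp only [Matrix.mul_apply]
    exact Finset.measurable_sum _ (fun m _ => ((measurable_ent a m).mul measurable_const))
  exact Measurable.subtype_mk this

lemma meas4 (a b a' b' a'' b'' a''' b''' : Fin p) :
    Measurable (fun V : G p => ent a b V * ent a' b' V * ent a'' b'' V * ent a''' b''' V) :=
  (((measurable_ent a b).mul (measurable_ent a' b')).mul (measurable_ent a'' b'')).mul
    (measurable_ent a''' b''')

lemma meas2 (a b a' b' : Fin p) :
    Measurable (fun V : G p => ent a b V * ent a' b' V) :=
  (measurable_ent a b).mul (measurable_ent a' b')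

variable {μ : Measure (G p)} [IsProbabilityMeasure μ]

lemma left_inv (hleft : ∀ g : G p, μ.map (fun V => g * V) = μ) (g : G p)
    (f : G p → ℝ) (hf : Measurable f) :
    ∫ V, f (g * V) ∂μ = ∫ V, f V ∂μ := by
  conv_rhs => rw [← hleft g]
  rw [integral_map (measurable_mul_left g).aemeasurable hf.aestronglyMeasurable]

lemma right_inv (hright : ∀ g : G p, μ.map (fun V => V * g) = μ) (g : G p)
    (f : G p → ℝ) (hf : Measurable f) :
    ∫ V, f (V * g) ∂μ = ∫ V, f V ∂μ := by
  conv_rhs => rw [← hright g]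
  rw [integral_map (measurable_mul_right g).aemeasurable hf.aestronglyMeasurable]

lemma int4 (a b a' b' a'' b'' a''' b''' : Fin p) :
    Integrable (fun V : G p => ent a b V * ent a' b' V * ent a'' b'' V * ent a''' b''' V) μ := by
  refine (integrable_const (1:ℝ)).mono'
    (meas4 a b a' b' a'' b'' a''' b''').aestronglyMeasurable (ae_of_all _ fun V => ?_)
  rw [Real.norm_eq_abs, abs_mul, abs_mul, abs_mul]
  have h1 := abs_ent_le_one V a b
  have h2 := abs_ent_le_one V a' b'
  have h3 := abs_ent_le_one V a'' b''
  have h4 := abs_ent_le_one V a''' b'''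
  have n1 := abs_nonneg (ent a b V)
  have n2 := abs_nonneg (ent a' b' V)
  have n3 := abs_nonneg (ent a'' b'' V)
  have n4 := abs_nonneg (ent a''' b''' V)
  calc |ent a b V| * |ent a' b' V| * |ent a'' b'' V| * |ent a''' b''' V|
      ≤ 1 * 1 * 1 * 1 := by
        gcongr
    _ = 1 := by norm_num

lemma int2 (a b a' b' : Fin p) :
    Integrable (fun V : G p => ent a b V * ent a' b' V) μ := by
  refine (integrable_const (1:ℝ)).mono'
    (meas2 a b a' b').aestronglyMeasurable (ae_of_all _ fun V => ?_)
  rw [Real.norm_eq_abs, abs_mul]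
  have h1 := abs_ent_le_one V a b
  have h2 := abs_ent_le_one V a' b'
  have n1 := abs_nonneg (ent a b V)
  have n2 := abs_nonneg (ent a' b' V)
  calc |ent a b V| * |ent a' b' V| ≤ 1 * 1 := by gcongr
    _ = 1 := by norm_num

lemma count_sum (i : Fin p) (A B : ℝ) :
    ∑ m : Fin p, (if m = i then A else B) = A + ((p:ℝ) - 1) * B := by
  have h : ∀ m : Fin p, (if m = i then A else B) = B + (if m = i then A - B else 0) := by
    intro m; split <;> ring
  rw [Finset.sum_congr rfl (fun m _ => h m), Finset.sum_add_distrib, Finset.sum_const,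
    Finset.sum_ite_eq' Finset.univ i (fun _ => A - B)]
  simp only [Finset.mem_univ, if_true, Finset.card_univ, Fintype.card_fin, nsmul_eq_mul]
  have hp : 0 < p := Fin.pos i
  have : (1:ℝ) ≤ (p:ℝ) := by exact_mod_cast hp
  ring



lemma swap_cond (a b x m : Fin p) : (x = Equiv.swap a b m) ↔ (m = Equiv.swap a b x) := by
  constructor <;> (intro h; simp [h, Equiv.swap_apply_self])

def swapM (a b : Fin p) : Matrix (Fin p) (Fin p) ℝ :=
  Matrix.of fun x y => if x = Equiv.swap a b y then 1 else 0

lemma swapM_mem (a b : Fin p) : swapM a b ∈ Matrix.orthogonalGroup (Fin p) ℝ := by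
  rw [Matrix.mem_orthogonalGroup_iff]
  ext x y
  simp only [Matrix.mul_apply, Matrix.star_eq_conjTranspose, Matrix.conjTranspose_apply,
    swapM, Matrix.of_apply, Matrix.one_apply, star_trivial, Matrix.transpose_apply]
  simp only [swap_cond a b x, ite_mul, one_mul, zero_mul]
  rw [Finset.sum_ite_eq' Finset.univ (Equiv.swap a b x)
      (fun m => if y = Equiv.swap a b m then (1:ℝ) else 0)]
  simp only [Finset.mem_univ, if_true, Equiv.swap_apply_self]
  by_cases h : x = y
  · simp [h]
  · rw [if_neg (fun hc : y = x => h hc.symm), if_neg h]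

def swapG (a b : Fin p) : ↥(Matrix.orthogonalGroup (Fin p) ℝ) := ⟨swapM a b, swapM_mem a b⟩


lemma ent_swap_left (a b x y : Fin p) (V : ↥(Matrix.orthogonalGroup (Fin p) ℝ)) :
    ent x y (swapG a b * V) = ent (Equiv.swap a b x) y V := by
  show ((swapM a b) * (V : Matrix (Fin p) (Fin p) ℝ)) x y = _
  rw [Matrix.mul_apply]
  simp only [swapM, Matrix.of_apply, swap_cond a b x, ite_mul, one_mul, zero_mul]
  rw [Finset.sum_ite_eq' Finset.univ (Equiv.swap a b x)
      (fun m => (V : Matrix (Fin p) (Fin p) ℝ) m y)]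
  simp [ent]

lemma ent_swap_right (a b x y : Fin p) (V : ↥(Matrix.orthogonalGroup (Fin p) ℝ)) :
    ent x y (V * swapG a b) = ent x (Equiv.swap a b y) V := by
  show ((V : Matrix (Fin p) (Fin p) ℝ) * (swapM a b)) x y = _
  rw [Matrix.mul_apply]
  simp only [swapM, Matrix.of_apply, mul_ite, mul_one, mul_zero]
  rw [Finset.sum_ite_eq' Finset.univ (Equiv.swap a b y)
      (fun m => (V : Matrix (Fin p) (Fin p) ℝ) x m)]
  simp [ent]

-- sign flip
def flipM (a : Fin p) : Matrix (Fin p) (Fin p) ℝ :=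
  Matrix.diagonal (fun m => if m = a then -1 else 1)

lemma flipM_mem (a : Fin p) : flipM a ∈ Matrix.orthogonalGroup (Fin p) ℝ := by
  rw [Matrix.mem_orthogonalGroup_iff]
  have h1 : star (flipM a) = flipM a := by
    simp only [flipM, Matrix.star_eq_conjTranspose, Matrix.diagonal_conjTranspose]
    congr 1
  rw [flipM, Matrix.diagonal_transpose, Matrix.diagonal_mul_diagonal]
  rw [show (fun m => (if m = a then (-1:ℝ) else 1) * (if m = a then -1 else 1)) = fun _ => (1:ℝ)
    from funext fun m => by by_cases h : m = a <;> simp [h]]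
  exact Matrix.diagonal_one

def flipG (a : Fin p) : ↥(Matrix.orthogonalGroup (Fin p) ℝ) := ⟨flipM a, flipM_mem a⟩

lemma ent_flip_left (a x y : Fin p) (V : ↥(Matrix.orthogonalGroup (Fin p) ℝ)) :
    ent x y (flipG a * V) = (if x = a then -1 else 1) * ent x y V := by
  show ((flipM a) * (V : Matrix (Fin p) (Fin p) ℝ)) x y = _
  rw [flipM, Matrix.diagonal_mul]
  rfl


lemma sum_split (i j : Fin p) (hij : i ≠ j) (f : Fin p → ℝ)
    (h0 : ∀ m, m ≠ i → m ≠ j → f m = 0) : ∑ m, f m = f i + f j := by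
  rw [← Finset.sum_subset (Finset.subset_univ ({i, j} : Finset (Fin p)))
    (fun m _ hm => by
      simp only [Finset.mem_insert, Finset.mem_singleton, not_or] at hm
      exact h0 m hm.1 hm.2)]
  rw [Finset.sum_pair hij]

lemma sum_single' (x : Fin p) (f : Fin p → ℝ) (h0 : ∀ m, m ≠ x → f m = 0) :
    ∑ m, f m = f x :=
  Finset.sum_eq_single x (fun b _ hb => h0 b hb) (fun h => absurd (Finset.mem_univ x) h)

def rotM (i j : Fin p) (c : ℝ) : Matrix (Fin p) (Fin p) ℝ :=
  Matrix.of fun x y =>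
    if x = i then (if y = i then c else if y = j then c else 0)
    else if x = j then (if y = i then -c else if y = j then c else 0)
    else if x = y then 1 else 0

lemma rotM_mem (i j : Fin p) (hij : i ≠ j) (c : ℝ) (hc : c * c + c * c = 1) :
    rotM i j c ∈ Matrix.orthogonalGroup (Fin p) ℝ := by
  rw [Matrix.mem_orthogonalGroup_iff]
  ext x y
  simp only [Matrix.mul_apply, Matrix.star_eq_conjTranspose, Matrix.conjTranspose_apply,
    star_trivial, rotM, Matrix.of_apply, Matrix.one_apply, Matrix.transpose_apply]
  have EC : ∀ a b : Fin p, (a = b) = (b = a) := fun a b => propext eq_comm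
  by_cases hx : x = i
  · by_cases hy : y = i
    · rw [sum_split i j hij _ (fun m hmi hmj => by simp [hx, hy, hmi, hmj, hij])]
      simp [hx, hy, hij, Ne.symm hij]
      linarith
    · by_cases hy' : y = j
      · rw [sum_split i j hij _ (fun m hmi hmj => by simp [hx, hy', hmi, hmj, hij])]
        simp [hx, hy', hij, Ne.symm hij]
        try ring
      · rw [sum_split i j hij _ (fun m hmi hmj => by
            simp [hx, hy, hy', hmi, hmj, hij, EC m i, EC m j, EC m x, EC m y])]
        simp [hx, hy, hy', hij, Ne.symm hij, EC i y, EC j y]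
  · by_cases hx' : x = j
    · by_cases hy : y = i
      · rw [sum_split i j hij _ (fun m hmi hmj => by simp [hx', hy, hmi, hmj, hij])]
        simp [hx', hy, hij, Ne.symm hij]
        try ring
      · by_cases hy' : y = j
        · rw [sum_split i j hij _ (fun m hmi hmj => by simp [hx', hy', hmi, hmj, hij])]
          simp [hx', hy', hij, Ne.symm hij]
          linarith
        · rw [sum_split i j hij _ (fun m hmi hmj => by
              simp [hx', hy, hy', hmi, hmj, hij, EC m i, EC m j, EC m x, EC m y])]
          simp [hx', hy, hy', hij, Ne.symm hij, EC i y, EC j y]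
    · have h0 : ∀ m : Fin p, m ≠ x →
          ((if x = i then if m = i then c else if m = j then c else 0
            else if x = j then if m = i then -c else if m = j then c else 0
            else if x = m then 1 else 0) *
           (if y = i then if m = i then c else if m = j then c else 0
            else if y = j then if m = i then -c else if m = j then c else 0
            else if y = m then 1 else 0)) = 0 := by
        intro m hm
        simp [hx, hx', Ne.symm hm]
      rw [sum_single' x _ h0]
      by_cases hy : y = i
      · simp [hx, hx', hy, EC i x]
      · by_cases hy' : y = j
        · simp [hx, hx', hy, hy', EC j x]
        · simp [hx, hx', hy, hy', EC y x]

def rotG (i j : Fin p) (hij : i ≠ j) (c : ℝ) (hc : c * c + c * c = 1) : G p :=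
  ⟨rotM i j c, rotM_mem i j hij c hc⟩

lemma ent_rot (i j : Fin p) (hij : i ≠ j) (c : ℝ) (hc : c * c + c * c = 1) (y : Fin p)
    (V : G p) :
    ent i y (rotG i j hij c hc * V) = c * ent i y V + c * ent j y V := by
  show ((rotM i j c) * (V : Matrix (Fin p) (Fin p) ℝ)) i y = _
  rw [Matrix.mul_apply]
  rw [sum_split i j hij _ (fun m hmi hmj => by
    simp [rotM, hmi, hmj])]
  simp [rotM, hij, Ne.symm hij, ent]

lemma flip_vanish (hleft : ∀ g : G p, μ.map (fun V => g * V) = μ) (r : Fin p)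
    (f : G p → ℝ) (hm : Measurable f) (hodd : ∀ V, f (flipG r * V) = -(f V)) :
    ∫ V, f V ∂μ = 0 := by
  have h := left_inv hleft (flipG r) f hm
  simp_rw [hodd] at h
  rw [integral_neg] at h
  linarith

end S7

open S7

/-- Lemma 3, part 3: for a Haar-distributed `p × p` orthogonal matrix, distinct rows
`i ≠ j` and distinct columns `l ≠ k`,
`E[v_{il} v_{jl} v_{ik} v_{jk}] = −1/((p−1)p(p+2))`. -/
theorem stmt7 (p : ℕ) (hp : 1 < p)
    (μ : Measure ↥(Matrix.orthogonalGroup (Fin p) ℝ)) [IsProbabilityMeasure μ]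
    (hleft : ∀ g : ↥(Matrix.orthogonalGroup (Fin p) ℝ),
      μ.map (fun V => g * V) = μ)
    (hright : ∀ g : ↥(Matrix.orthogonalGroup (Fin p) ℝ),
      μ.map (fun V => V * g) = μ)
    (i j l k : Fin p) (hij : i ≠ j) (hlk : l ≠ k) :
    ∫ V, ((V : Matrix (Fin p) (Fin p) ℝ) i l) * ((V : Matrix (Fin p) (Fin p) ℝ) j l)
        * ((V : Matrix (Fin p) (Fin p) ℝ) i k) * ((V : Matrix (Fin p) (Fin p) ℝ) j k) ∂μ
      = -1 / (((p : ℝ) - 1) * (p : ℝ) * ((p : ℝ) + 2)) := by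
  -- Step 1: second moment
  have hq : (p:ℝ) * (∫ V, ent i k V * ent i k V ∂μ) = 1 := by
    have hsum : ∑ m : Fin p, ∫ V, ent m k V * ent m k V ∂μ = 1 := by
      rw [← integral_finset_sum _ (fun m _ => int2 m k m k)]
      rw [show (fun V : G p => ∑ m : Fin p, ent m k V * ent m k V) = fun _ => (1:ℝ) from
        funext fun V => by simpa using col_orth V k k]
      simp
    have heq : ∀ m : Fin p, (∫ V, ent m k V * ent m k V ∂μ)
        = ∫ V, ent i k V * ent i k V ∂μ := by
      intro m
      rcases eq_or_ne m i with rfl | hm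
      · rfl
      · have h := left_inv hleft (swapG m i) (fun V => ent i k V * ent i k V) (meas2 i k i k)
        simp only [ent_swap_left, Equiv.swap_apply_right] at h
        exact h
    rw [Finset.sum_congr rfl (fun m _ => heq m)] at hsum
    simpa [Finset.sum_const, Finset.card_univ, nsmul_eq_mul] using hsum
  -- Step 2: A + (p-1) Bjk = q
  have h2 : (∫ V, ent i k V * ent i k V * ent i k V * ent i k V ∂μ)
      + ((p:ℝ) - 1) * (∫ V, ent j k V * ent j k V * ent i k V * ent i k V ∂μ)
      = ∫ V, ent i k V * ent i k V ∂μ := by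
    have hsum : ∑ m : Fin p, ∫ V, ent m k V * ent m k V * ent i k V * ent i k V ∂μ
        = ∫ V, ent i k V * ent i k V ∂μ := by
      rw [← integral_finset_sum _ (fun m _ => int4 m k m k i k i k)]
      congr 1
      funext V
      rw [← Finset.sum_mul, ← Finset.sum_mul, col_orth V k k, if_pos rfl, one_mul]
    have heq : ∀ m : Fin p, (∫ V, ent m k V * ent m k V * ent i k V * ent i k V ∂μ)
        = if m = i then (∫ V, ent i k V * ent i k V * ent i k V * ent i k V ∂μ)
          else (∫ V, ent j k V * ent j k V * ent i k V * ent i k V ∂μ) := by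
      intro m
      rcases eq_or_ne m i with rfl | hm
      · rw [if_pos rfl]
      · rw [if_neg hm]
        rcases eq_or_ne m j with rfl | hmj
        · rfl
        · have h := left_inv hleft (swapG m j)
            (fun V => ent j k V * ent j k V * ent i k V * ent i k V) (meas4 j k j k i k i k)
          simp only [ent_swap_left, Equiv.swap_apply_right,
            Equiv.swap_apply_of_ne_of_ne (Ne.symm hm) hij] at h
          exact h
    rw [Finset.sum_congr rfl (fun m _ => heq m), count_sum] at hsum
    exact hsum
  have hBB : (∫ V, ent j k V * ent j k V * ent i k V * ent i k V ∂μ)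
      = ∫ V, ent i k V * ent i k V * ent j k V * ent j k V ∂μ := by
    congr 1; funext V; ring
  -- Step 3: A = 3B via rotation
  have hcc : Real.sqrt 2⁻¹ * Real.sqrt 2⁻¹ = 2⁻¹ := Real.mul_self_sqrt (by norm_num)
  have hc : Real.sqrt 2⁻¹ * Real.sqrt 2⁻¹ + Real.sqrt 2⁻¹ * Real.sqrt 2⁻¹ = 1 := by
    rw [hcc]; norm_num
  set c : ℝ := Real.sqrt 2⁻¹ with hcdef
  have hodd1 : ∫ V, ent i k V * ent i k V * ent i k V * ent j k V ∂μ = 0 := by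
    refine flip_vanish hleft j _ (meas4 i k i k i k j k) (fun V => ?_)
    simp only [ent_flip_left, if_neg hij, eq_self_iff_true, if_true, one_mul, neg_one_mul]
    ring
  have hodd2 : ∫ V, ent i k V * ent j k V * ent j k V * ent j k V ∂μ = 0 := by
    refine flip_vanish hleft i _ (meas4 i k j k j k j k) (fun V => ?_)
    simp only [ent_flip_left, if_neg (Ne.symm hij), eq_self_iff_true, if_true, one_mul, neg_one_mul]
    ring
  have hA' : (∫ V, ent j k V * ent j k V * ent j k V * ent j k V ∂μ)
      = ∫ V, ent i k V * ent i k V * ent i k V * ent i k V ∂μ := by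
    have h := left_inv hleft (swapG i j)
      (fun V => ent i k V * ent i k V * ent i k V * ent i k V) (meas4 i k i k i k i k)
    simp only [ent_swap_left, Equiv.swap_apply_left] at h
    exact h
  have hrot := left_inv hleft (rotG i j hij c hc)
    (fun V => ent i k V * ent i k V * ent i k V * ent i k V) (meas4 i k i k i k i k)
  simp only [ent_rot] at hrot
  have hexp : (fun V : G p => (c * ent i k V + c * ent j k V) * (c * ent i k V + c * ent j k V)
        * (c * ent i k V + c * ent j k V) * (c * ent i k V + c * ent j k V))
      = fun V : G p => (c * c * (c * c)) * (ent i k V * ent i k V * ent i k V * ent i k V)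
        + ((c * c * (c * c)) * (4 * (ent i k V * ent i k V * ent i k V * ent j k V))
        + ((c * c * (c * c)) * (6 * (ent i k V * ent i k V * ent j k V * ent j k V))
        + ((c * c * (c * c)) * (4 * (ent i k V * ent j k V * ent j k V * ent j k V))
        + (c * c * (c * c)) * (ent j k V * ent j k V * ent j k V * ent j k V)))) :=
    funext fun V => by ring
  rw [hexp] at hrot
  have I1 : Integrable (fun V : G p =>
      (c * c * (c * c)) * (ent i k V * ent i k V * ent i k V * ent i k V)) μ :=
    (int4 i k i k i k i k).const_mul _
  have I2 : Integrable (fun V : G p =>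
      (c * c * (c * c)) * (4 * (ent i k V * ent i k V * ent i k V * ent j k V))) μ :=
    ((int4 i k i k i k j k).const_mul 4).const_mul _
  have I3 : Integrable (fun V : G p =>
      (c * c * (c * c)) * (6 * (ent i k V * ent i k V * ent j k V * ent j k V))) μ :=
    ((int4 i k i k j k j k).const_mul 6).const_mul _
  have I4 : Integrable (fun V : G p =>
      (c * c * (c * c)) * (4 * (ent i k V * ent j k V * ent j k V * ent j k V))) μ :=
    ((int4 i k j k j k j k).const_mul 4).const_mul _
  have I5 : Integrable (fun V : G p =>
      (c * c * (c * c)) * (ent j k V * ent j k V * ent j k V * ent j k V)) μ :=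
    (int4 j k j k j k j k).const_mul _
  have I45 : Integrable (fun V : G p =>
      (c * c * (c * c)) * (4 * (ent i k V * ent j k V * ent j k V * ent j k V))
      + (c * c * (c * c)) * (ent j k V * ent j k V * ent j k V * ent j k V)) μ := I4.add I5
  have I345 : Integrable (fun V : G p =>
      (c * c * (c * c)) * (6 * (ent i k V * ent i k V * ent j k V * ent j k V))
      + ((c * c * (c * c)) * (4 * (ent i k V * ent j k V * ent j k V * ent j k V))
      + (c * c * (c * c)) * (ent j k V * ent j k V * ent j k V * ent j k V))) μ := I3.add I45
  have I2345 : Integrable (fun V : G p =>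
      (c * c * (c * c)) * (4 * (ent i k V * ent i k V * ent i k V * ent j k V))
      + ((c * c * (c * c)) * (6 * (ent i k V * ent i k V * ent j k V * ent j k V))
      + ((c * c * (c * c)) * (4 * (ent i k V * ent j k V * ent j k V * ent j k V))
      + (c * c * (c * c)) * (ent j k V * ent j k V * ent j k V * ent j k V)))) μ := I2.add I345
  rw [integral_add I1 I2345, integral_add I2 I345, integral_add I3 I45,
    integral_add I4 I5] at hrot
  simp only [MeasureTheory.integral_const_mul] at hrot
  rw [hodd1, hodd2, hA', hcc] at hrot
  norm_num at hrot
  have h3 : (∫ V, ent i k V * ent i k V * ent i k V * ent i k V ∂μ)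
      = 3 * (∫ V, ent i k V * ent i k V * ent j k V * ent j k V ∂μ) := by
    linarith [hrot]
  -- Step 4: B2 + (p-1) D = 0
  have h4 : (∫ V, ent i k V * ent j k V * ent i k V * ent j k V ∂μ)
      + ((p:ℝ) - 1) * (∫ V, ent i l V * ent j l V * ent i k V * ent j k V ∂μ) = 0 := by
    have hsum : ∑ m : Fin p, ∫ V, ent i m V * ent j m V * ent i k V * ent j k V ∂μ = 0 := by
      rw [← integral_finset_sum _ (fun m _ => int4 i m j m i k j k)]
      rw [show (fun V : G p => ∑ m : Fin p, ent i m V * ent j m V * ent i k V * ent j k V)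
          = fun _ => (0:ℝ) from funext fun V => by
        rw [← Finset.sum_mul, ← Finset.sum_mul, row_orth V i j, if_neg hij, zero_mul, zero_mul]]
      simp
    have heq : ∀ m : Fin p, (∫ V, ent i m V * ent j m V * ent i k V * ent j k V ∂μ)
        = if m = k then (∫ V, ent i k V * ent j k V * ent i k V * ent j k V ∂μ)
          else (∫ V, ent i l V * ent j l V * ent i k V * ent j k V ∂μ) := by
      intro m
      rcases eq_or_ne m k with rfl | hm
      · rw [if_pos rfl]
      · rw [if_neg hm]
        rcases eq_or_ne m l with rfl | hml
        · rfl
        · have h := right_inv hright (swapG m l)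
            (fun V => ent i l V * ent j l V * ent i k V * ent j k V) (meas4 i l j l i k j k)
          simp only [ent_swap_right, Equiv.swap_apply_right,
            Equiv.swap_apply_of_ne_of_ne (Ne.symm hm) (Ne.symm hlk)] at h
          exact h
    rw [Finset.sum_congr rfl (fun m _ => heq m), count_sum] at hsum
    exact hsum
  have hB2 : (∫ V, ent i k V * ent j k V * ent i k V * ent j k V ∂μ)
      = ∫ V, ent i k V * ent i k V * ent j k V * ent j k V ∂μ := by
    congr 1; funext V; ring
  -- final algebra
  rw [hBB] at h2
  rw [hB2] at h4
  have hp2 : (2:ℝ) ≤ (p:ℝ) := by exact_mod_cast hp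
  have hM : (((p:ℝ) - 1) * (p:ℝ) * ((p:ℝ) + 2)) ≠ 0 := by
    have h1 : (0:ℝ) < (p:ℝ) - 1 := by linarith
    have h2' : (0:ℝ) < (p:ℝ) := by linarith
    have h3' : (0:ℝ) < (p:ℝ) + 2 := by linarith
    positivity
  have hB : ((p:ℝ) + 2) * (∫ V, ent i k V * ent i k V * ent j k V * ent j k V ∂μ)
      = ∫ V, ent i k V * ent i k V ∂μ := by linear_combination h2 - h3
  have final : (∫ V, ent i l V * ent j l V * ent i k V * ent j k V ∂μ)
      = -1 / (((p:ℝ) - 1) * (p:ℝ) * ((p:ℝ) + 2)) := by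
    rw [eq_div_iff hM]
    linear_combination ((p:ℝ) * ((p:ℝ) + 2)) * h4 - (p:ℝ) * hB - hq
  exact final
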